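/- Suppose A_0 = V W^H X and A_1 = V Λ W^H X, where V ∈ ℂ^{n×k}, W^H X ∈ ℂ^{k×m}, Λ ∈ ℂ^{k×k} is diagonal, V has full column rank k, and W^H X has full row rank k. Let A_0 = V_0 Σ_0 W_0^H be a compact singular value decomposition with V_0 ∈ ℂ^{n×k}, Σ_0 ∈ ℂ^{k×k} invertible diagonal, W_0 ∈ ℂ^{m×k}. Then V_0^H V is invertible and B := V_0^H A_1 W_0 Σ_0^{-1} = (V_0^H V) Λ (V_0^H V)^{-1}; in particular B is similar to Λ, so B and Λ have the same eigenvalues. -/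

import Mathlib

open Matrix

/-- Beyn's linearization: if `A₀ = V G`, `A₁ = V Λ G` with `V` of full column rank `k`,
`G` of full row rank `k`, `Λ` diagonal, and `A₀ = V₀ Σ₀ W₀ᴴ` is a compact SVD, then
`V₀ᴴ V` is invertible and `B := V₀ᴴ A₁ W₀ Σ₀⁻¹ = (V₀ᴴ V) Λ (V₀ᴴ V)⁻¹`, so `B` is similar to `Λ`. -/
theorem stmt3 {n m k : ℕ}
    (V : Matrix (Fin n) (Fin k) ℂ) (G : Matrix (Fin k) (Fin m) ℂ)
    (lam : Fin k → ℂ)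
    (hVrank : V.rank = k) (hGrank : G.rank = k)
    (A0 A1 : Matrix (Fin n) (Fin m) ℂ)
    (hA0 : A0 = V * G) (hA1 : A1 = V * Matrix.diagonal lam * G)
    (V0 : Matrix (Fin n) (Fin k) ℂ) (W0 : Matrix (Fin m) (Fin k) ℂ)
    (S0 : Matrix (Fin k) (Fin k) ℂ) (sig : Fin k → ℂ)
    (hS0 : S0 = Matrix.diagonal sig) (hS0unit : IsUnit S0.det)
    (hV0 : V0ᴴ * V0 = 1) (hW0 : W0ᴴ * W0 = 1)
    (hSVD : A0 = V0 * S0 * W0ᴴ) :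
    IsUnit (V0ᴴ * V).det ∧
      V0ᴴ * A1 * W0 * S0⁻¹ = (V0ᴴ * V) * Matrix.diagonal lam * (V0ᴴ * V)⁻¹ := by
  have h1 : V0ᴴ * A0 * W0 = S0 := by
    rw [hSVD]
    calc V0ᴴ * (V0 * S0 * W0ᴴ) * W0 = (V0ᴴ * V0) * S0 * (W0ᴴ * W0) := by
          simp only [Matrix.mul_assoc]
      _ = S0 := by rw [hV0, hW0, Matrix.one_mul, Matrix.mul_one]
  have h2 : (V0ᴴ * V) * (G * W0) = S0 := by
    rw [← h1, hA0]; simp only [Matrix.mul_assoc]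
  have h3 : (V0ᴴ * V) * (G * W0 * S0⁻¹) = 1 := by
    rw [← Matrix.mul_assoc, h2, Matrix.mul_nonsing_inv _ hS0unit]
  have hunit : IsUnit (V0ᴴ * V).det := by
    have := congrArg Matrix.det h3
    rw [Matrix.det_mul, Matrix.det_one] at this
    exact IsUnit.of_mul_eq_one _ this
  refine ⟨hunit, ?_⟩
  have hinv : (V0ᴴ * V)⁻¹ = G * W0 * S0⁻¹ := Matrix.inv_eq_right_inv h3
  rw [hinv, hA1]
  simp only [Matrix.mul_assoc]
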